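/- Let A be a commutative ring, I a set, R = A[(X_i)_{i∈I}] the polynomial ring, G a commutative group, ψ : ℤ^(⊕I) → G a surjective group homomorphism, H ≤ G a subgroup of finite index, and S = R_(H). Let 𝔞, 𝔟 ⊆ R be finitely generated monomial ideals. If ⌊𝔞⌋_H = ⌊𝔟⌋_H, then Γ_{𝔞_(H)} = Γ_{𝔟_(H)}, i.e., Γ_{𝔞_(H)}(M) = Γ_{𝔟_(H)}(M) for every S-module M. (Proposition 2.40 b).) -/

import Mathlib

set_option synthInstance.maxHeartbeats 1000000
set_option maxHeartbeats 1000000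

open MvPolynomial

/-- `suppInd μ` is the characteristic function of the support of `μ`,
so that `X^(suppInd μ) = ∏_{i : μ i > 0} X i`. -/
noncomputable def suppInd {I : Type v} (μ : I →₀ ℕ) : I →₀ ℕ :=
  μ.mapRange (fun n => if n = 0 then 0 else 1) (by simp)

/-- The canonical embedding `ℕ^(⊕I) → ℤ^(⊕I)`. -/
noncomputable def natToInt {I : Type v} (μ : I →₀ ℕ) : I →₀ ℤ :=
  Finsupp.mapRange (Nat.cast : ℕ → ℤ) Nat.cast_zero μ

/-- A monomial ideal of `A[(X_i)_{i ∈ I}]` is an ideal generated by a set of monomials. -/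
def IsMonomialIdeal {A : Type u} [CommRing A] {I : Type v}
    (𝔞 : Ideal (MvPolynomial I A)) : Prop :=
  ∃ E : Set (I →₀ ℕ), 𝔞 = Ideal.span ((fun μ => monomial μ (1 : A)) '' E)

/-- `⌊𝔞⌋` is the ideal generated by the monomials `X^(suppInd μ)` for all monomials
`X^μ ∈ 𝔞`. -/
noncomputable def mvFloor {A : Type u} [CommRing A] {I : Type v}
    (𝔞 : Ideal (MvPolynomial I A)) : Ideal (MvPolynomial I A) :=
  Ideal.span {f | ∃ μ : I →₀ ℕ, monomial μ (1 : A) ∈ 𝔞 ∧ f = monomial (suppInd μ) (1 : A)}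

/-- The degree restriction `S = R_(H)` of `R = A[(X_i)_{i ∈ I}]` (graded via
`ψ : ℤ^(⊕I) → G`) to a subgroup `H ≤ G`: the `A`-subalgebra of `R` generated by the
monomials `X^μ` whose degree `ψ(μ)` lies in `H`. -/
noncomputable def degRestrict (A : Type u) [CommRing A] {I : Type v} {G : Type w} [AddCommGroup G]
    (ψ : (I →₀ ℤ) →+ G) (H : AddSubgroup G) : Subalgebra A (MvPolynomial I A) :=
  Algebra.adjoin A {f | ∃ μ : I →₀ ℕ, ψ (natToInt μ) ∈ H ∧ f = monomial μ (1 : A)}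

/-- The degree restriction `𝔠_(H) = 𝔠 ∩ S` of an ideal `𝔠` of `R`, as an ideal of
`S = R_(H)`. -/
noncomputable def idealRestrict {A : Type u} [CommRing A] {I : Type v} {G : Type w} [AddCommGroup G]
    (ψ : (I →₀ ℤ) →+ G) (H : AddSubgroup G) (𝔠 : Ideal (MvPolynomial I A)) :
    Ideal (degRestrict A ψ H) :=
  Ideal.comap (degRestrict A ψ H).val 𝔠

/-- `E(𝔞)`: the set of minimal elements of `{μ ∈ ℕ^(⊕I) | X^μ ∈ 𝔞}` with respect to
the componentwise order. -/
def Emin {A : Type u} [CommRing A] {I : Type v} (𝔞 : Ideal (MvPolynomial I A)) :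
    Set (I →₀ ℕ) :=
  {μ | monomial μ (1 : A) ∈ 𝔞 ∧ ∀ ν : I →₀ ℕ, monomial ν (1 : A) ∈ 𝔞 → ν ≤ μ → ν = μ}

/-- `m_μ`: the least `m ∈ ℕ` such that `X^(m • suppInd μ) ∈ 𝔞_(H) = 𝔞 ∩ S`. -/
noncomputable def mdeg {A : Type u} [CommRing A] {I : Type v} {G : Type w} [AddCommGroup G]
    (ψ : (I →₀ ℤ) →+ G) (H : AddSubgroup G) (𝔞 : Ideal (MvPolynomial I A))
    (μ : I →₀ ℕ) : ℕ :=
  sInf {m : ℕ | monomial (m • suppInd μ) (1 : A) ∈ 𝔞 ∧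
    monomial (m • suppInd μ) (1 : A) ∈ degRestrict A ψ H}

/-- `⌊𝔞⌋_H`: the ideal of `S = R_(H)` generated by the monomials `X^(m_μ • suppInd μ)`
for `μ ∈ E(𝔞)`. -/
noncomputable def floorH {A : Type u} [CommRing A] {I : Type v} {G : Type w} [AddCommGroup G]
    (ψ : (I →₀ ℤ) →+ G) (H : AddSubgroup G) (𝔞 : Ideal (MvPolynomial I A)) :
    Ideal (degRestrict A ψ H) :=
  Ideal.span {s | ∃ μ ∈ Emin 𝔞,
    (s : MvPolynomial I A) = monomial (mdeg ψ H 𝔞 μ • suppInd μ) (1 : A)}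


section Aux

variable {A : Type u} [CommRing A] {I : Type v} {G : Type w} [AddCommGroup G]
  (ψ : (I →₀ ℤ) →+ G) (H : AddSubgroup G)

lemma natToInt_apply (μ : I →₀ ℕ) (i : I) : natToInt μ i = (μ i : ℤ) :=
  Finsupp.mapRange_apply

lemma natToInt_add (a b : I →₀ ℕ) : natToInt (a + b) = natToInt a + natToInt b := by
  ext i; simp [natToInt_apply]

lemma natToInt_zero : natToInt (0 : I →₀ ℕ) = 0 := by
  ext i; simp [natToInt_apply]

lemma natToInt_smul (n : ℕ) (a : I →₀ ℕ) : natToInt (n • a) = n • natToInt a := by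
  ext i
  simp only [natToInt_apply, Finsupp.smul_apply, smul_eq_mul]
  push_cast
  ring

lemma natToInt_sub {a b : I →₀ ℕ} (h : b ≤ a) :
    natToInt (a - b) = natToInt a - natToInt b := by
  ext i
  have hi : b i ≤ a i := Finsupp.le_def.mp h i
  simp only [natToInt_apply, Finsupp.tsub_apply, Finsupp.sub_apply]
  omega

lemma suppInd_apply (μ : I →₀ ℕ) (i : I) : suppInd μ i = if μ i = 0 then 0 else 1 :=
  Finsupp.mapRange_apply

lemma suppInd_le (μ : I →₀ ℕ) : suppInd μ ≤ μ := by
  rw [Finsupp.le_def]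
  intro i
  rw [suppInd_apply]
  split <;> omega

lemma suppInd_zero : suppInd (0 : I →₀ ℕ) = 0 := by
  ext i; simp [suppInd_apply]

lemma degree_add' (a b : I →₀ ℕ) :
    Finsupp.degree (a + b) = Finsupp.degree a + Finsupp.degree b := by
  simp only [Finsupp.degree_eq_weight_one, map_add]

/-- The subalgebra of polynomials all of whose monomials have degree in `H`,
used to characterize membership in `degRestrict`. -/
private def degSub : Subalgebra A (MvPolynomial I A) where
  carrier := {f | ∀ ρ ∈ f.support, ψ (natToInt ρ) ∈ H}
  mul_mem' := by
    classical
    intro a b ha hb ρ hρ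
    obtain ⟨u, hu, v, hv, rfl⟩ := Finset.mem_add.mp (MvPolynomial.support_mul a b hρ)
    rw [natToInt_add, map_add]
    exact H.add_mem (ha u hu) (hb v hv)
  one_mem' := by
    classical
    intro ρ hρ
    have h := MvPolynomial.mem_support_iff.mp hρ
    have : ρ = 0 := by
      by_contra hc
      exact h (by rw [MvPolynomial.coeff_one, if_neg (fun hh => hc hh.symm)])
    rw [this, natToInt_zero, map_zero]
    exact H.zero_mem
  add_mem' := by
    classical
    intro a b ha hb ρ hρ
    rcases Finset.mem_union.mp (Finsupp.support_add hρ) with h | h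
    exacts [ha ρ h, hb ρ h]
  zero_mem' := by simp
  algebraMap_mem' := by
    classical
    intro a ρ hρ
    have h := MvPolynomial.mem_support_iff.mp hρ
    have : ρ = 0 := by
      by_contra hc
      exact h (by
        rw [MvPolynomial.algebraMap_eq, MvPolynomial.coeff_C,
          if_neg (fun hh => hc hh.symm)])
    rw [this, natToInt_zero, map_zero]
    exact H.zero_mem

lemma mem_degRestrict_iff {f : MvPolynomial I A} :
    f ∈ degRestrict A ψ H ↔ ∀ ρ ∈ f.support, ψ (natToInt ρ) ∈ H := by
  classical
  constructor
  · intro hf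
    have hle : degRestrict A ψ H ≤ degSub ψ H := by
      apply Algebra.adjoin_le
      rintro g ⟨μ, hμ, rfl⟩
      show ∀ ρ ∈ (monomial μ (1 : A)).support, ψ (natToInt ρ) ∈ H
      intro ρ hρ
      have h := MvPolynomial.mem_support_iff.mp hρ
      have : ρ = μ := by
        by_contra hc
        exact h (by rw [MvPolynomial.coeff_monomial, if_neg (fun hh => hc hh.symm)])
      rw [this]
      exact hμ
    exact fun ρ hρ => hle hf ρ hρ
  · intro hf
    rw [MvPolynomial.as_sum f]
    apply Subalgebra.sum_mem
    intro ρ hρ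
    have hrw : monomial ρ (MvPolynomial.coeff ρ f)
        = MvPolynomial.C (MvPolynomial.coeff ρ f) * monomial ρ (1 : A) := by
      rw [MvPolynomial.C_mul_monomial, mul_one]
    rw [hrw, ← MvPolynomial.algebraMap_eq]
    exact (degRestrict A ψ H).mul_mem ((degRestrict A ψ H).algebraMap_mem _)
      (Algebra.subset_adjoin ⟨ρ, hf ρ hρ, rfl⟩)

/-- The monomial `X^ρ` as an element of `S = R_(H)`, for `ψ(ρ) ∈ H`. -/
noncomputable def monS (ρ : I →₀ ℕ) (h : ψ (natToInt ρ) ∈ H) : degRestrict A ψ H :=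
  ⟨monomial ρ (1 : A), Algebra.subset_adjoin ⟨ρ, h, rfl⟩⟩

@[simp] lemma monS_coe (ρ : I →₀ ℕ) (h : ψ (natToInt ρ) ∈ H) :
    ((monS ψ H ρ h : degRestrict A ψ H) : MvPolynomial I A) = monomial ρ (1 : A) := rfl

/-- If every monomial of `s ∈ S` lies in an ideal `𝔡` of `S`, then `s ∈ 𝔡`. -/
lemma mem_of_support (𝔡 : Ideal (degRestrict A ψ H)) (s : degRestrict A ψ H)
    (hs : ∀ ρ, ρ ∈ (s : MvPolynomial I A).support →
      ∀ (h : ψ (natToInt ρ) ∈ H), monS ψ H ρ h ∈ 𝔡) :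
    s ∈ 𝔡 := by
  classical
  have hmem := (mem_degRestrict_iff ψ H).mp s.2
  set mS : (I →₀ ℕ) → degRestrict A ψ H := fun ρ =>
    if h : ψ (natToInt ρ) ∈ H then monS ψ H ρ h else 0 with hmS
  have hrepr : s = ∑ ρ ∈ (s : MvPolynomial I A).support,
      (algebraMap A (degRestrict A ψ H) (MvPolynomial.coeff ρ (s : MvPolynomial I A))) * mS ρ := by
    apply Subtype.ext
    push_cast
    conv_lhs => rw [MvPolynomial.as_sum (s : MvPolynomial I A)]
    apply Finset.sum_congr rfl
    intro ρ hρ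
    have h2 : ((mS ρ : degRestrict A ψ H) : MvPolynomial I A) = monomial ρ (1 : A) := by
      rw [hmS]
      simp only [dif_pos (hmem ρ hρ)]
      rfl
    rw [h2, MvPolynomial.algebraMap_eq, MvPolynomial.C_mul_monomial, mul_one]
  rw [hrepr]
  apply Ideal.sum_mem
  intro ρ hρ
  apply Ideal.mul_mem_left
  have : mS ρ = monS ψ H ρ (hmem ρ hρ) := by rw [hmS]; simp only [dif_pos (hmem ρ hρ)]
  rw [this]
  exact hs ρ hρ (hmem ρ hρ)

lemma mdeg_spec (hH : H.FiniteIndex) {𝔞 : Ideal (MvPolynomial I A)} {μ : I →₀ ℕ}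
    (hμ : monomial μ (1 : A) ∈ 𝔞) :
    monomial (mdeg ψ H 𝔞 μ • suppInd μ) (1 : A) ∈ 𝔞 ∧
      monomial (mdeg ψ H 𝔞 μ • suppInd μ) (1 : A) ∈ degRestrict A ψ H := by
  have hne : {m : ℕ | monomial (m • suppInd μ) (1 : A) ∈ 𝔞 ∧
      monomial (m • suppInd μ) (1 : A) ∈ degRestrict A ψ H}.Nonempty := by
    refine ⟨(1 + Finsupp.degree μ) * H.index, ?_, ?_⟩
    · have hle : μ ≤ ((1 + Finsupp.degree μ) * H.index) • suppInd μ := by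
        rw [Finsupp.le_def]
        intro i
        rw [Finsupp.smul_apply, suppInd_apply]
        rcases eq_or_ne (μ i) 0 with h | h
        · simp [h]
        · have h1 : μ i ≤ Finsupp.degree μ := Finsupp.le_degree i μ
          have h2 : H.index ≠ 0 := hH.index_ne_zero
          rw [if_neg h, smul_eq_mul, mul_one]
          calc μ i ≤ 1 + Finsupp.degree μ := by omega
            _ ≤ (1 + Finsupp.degree μ) * H.index :=
              Nat.le_mul_of_pos_right _ (Nat.pos_of_ne_zero h2)
      have hsplit : monomial (((1 + Finsupp.degree μ) * H.index) • suppInd μ) (1 : A)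
          = monomial ((((1 + Finsupp.degree μ) * H.index) • suppInd μ) - μ) (1 : A)
            * monomial μ (1 : A) := by
        rw [MvPolynomial.monomial_mul, one_mul, tsub_add_cancel_of_le hle]
      rw [hsplit]
      exact Ideal.mul_mem_left _ _ hμ
    · apply Algebra.subset_adjoin
      refine ⟨_, ?_, rfl⟩
      rw [natToInt_smul, map_nsmul, mul_smul]
      exact H.nsmul_mem (AddSubgroup.nsmul_index_mem H _) _
  exact Nat.sInf_mem hne

lemma floorH_le_idealRestrict (hH : H.FiniteIndex) (𝔞 : Ideal (MvPolynomial I A)) :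
    floorH ψ H 𝔞 ≤ idealRestrict ψ H 𝔞 := by
  apply Ideal.span_le.mpr
  rintro s ⟨μ, hμ, hs⟩
  show s ∈ Ideal.comap (degRestrict A ψ H).val 𝔞
  rw [Ideal.mem_comap]
  show (s : MvPolynomial I A) ∈ 𝔞
  rw [hs]
  exact (mdeg_spec ψ H hH hμ.1).1

lemma exists_emin_le {𝔞 : Ideal (MvPolynomial I A)} {ρ : I →₀ ℕ}
    (hρ : monomial ρ (1 : A) ∈ 𝔞) : ∃ μ ∈ Emin 𝔞, μ ≤ ρ := by
  set D : Set ℕ := {d | ∃ ν : I →₀ ℕ, ν ≤ ρ ∧ monomial ν (1 : A) ∈ 𝔞 ∧ Finsupp.degree ν = d}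
    with hD
  have hDne : D.Nonempty := ⟨_, ρ, le_rfl, hρ, rfl⟩
  obtain ⟨ν, hνρ, hν𝔞, hνd⟩ := Nat.sInf_mem hDne
  refine ⟨ν, ⟨hν𝔞, ?_⟩, hνρ⟩
  intro ν' h𝔞' hle
  have h1 : Finsupp.degree ν ≤ Finsupp.degree ν' := by
    rw [hνd]
    exact Nat.sInf_le ⟨ν', hle.trans hνρ, h𝔞', rfl⟩
  obtain ⟨c, rfl⟩ := le_iff_exists_add.mp hle
  have h2 : Finsupp.degree (ν' + c) = Finsupp.degree ν' + Finsupp.degree c := degree_add' _ _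
  have h3 : Finsupp.degree c = 0 := by omega
  rw [(Finsupp.degree_eq_zero_iff c).mp h3, add_zero]

lemma emin_finite [Nontrivial A] {𝔞 : Ideal (MvPolynomial I A)}
    (hmon : IsMonomialIdeal 𝔞) (hfg : 𝔞.FG) : (Emin (A := A) 𝔞).Finite := by
  classical
  obtain ⟨E, hE⟩ := hmon
  obtain ⟨fs, hfs⟩ := hfg
  set F : Finset (I →₀ ℕ) := fs.biUnion (fun f => f.support) with hF
  have hsuppmono : ∀ ρ : I →₀ ℕ, (monomial ρ (1 : A)).support = {ρ} := by
    intro ρ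
    rw [MvPolynomial.support_monomial, if_neg (one_ne_zero)]
  have hF𝔞 : ∀ ρ ∈ F, monomial ρ (1 : A) ∈ 𝔞 := by
    intro ρ hρ
    obtain ⟨f, hf, hρf⟩ := Finset.mem_biUnion.mp hρ
    have hf𝔞 : f ∈ 𝔞 := by
      rw [← hfs]
      exact Ideal.subset_span hf
    rw [hE, MvPolynomial.mem_ideal_span_monomial_image] at hf𝔞 ⊢
    intro xi hxi
    rw [hsuppmono, Finset.mem_singleton] at hxi
    rw [hxi]
    exact hf𝔞 ρ hρf
  have key : ∀ μ ∈ Emin (A := A) 𝔞, μ ∈ F := by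
    intro μ hμ
    have h𝔞F : 𝔞 ≤ Ideal.span ((fun ν => monomial ν (1 : A)) '' ↑F) := by
      rw [← hfs]
      apply Ideal.span_le.mpr
      intro f hf
      rw [MvPolynomial.as_sum f]
      apply Ideal.sum_mem
      intro ρ hρ
      have hrw : monomial ρ (MvPolynomial.coeff ρ f)
          = MvPolynomial.C (MvPolynomial.coeff ρ f) * monomial ρ (1 : A) := by
        rw [MvPolynomial.C_mul_monomial, mul_one]
      rw [hrw]
      apply Ideal.mul_mem_left
      apply Ideal.subset_span
      exact ⟨ρ, Finset.mem_coe.mpr (Finset.mem_biUnion.mpr ⟨f, hf, hρ⟩), rfl⟩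
    have hμF := h𝔞F hμ.1
    rw [MvPolynomial.mem_ideal_span_monomial_image] at hμF
    obtain ⟨ν, hνF, hνμ⟩ := hμF μ (by rw [hsuppmono]; exact Finset.mem_singleton_self μ)
    have hνmem : ν ∈ F := hνF
    have := hμ.2 ν (hF𝔞 ν hνmem) hνμ
    rwa [← this]
  exact Set.Finite.subset F.finite_toSet key

lemma pow_le_span_prods {R : Type*} [CommRing R] (c : Ideal R) (k : ℕ) :
    c ^ k ≤ Ideal.span {x | ∃ f : Fin k → R, (∀ i, f i ∈ c) ∧ x = ∏ i, f i} := by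
  induction k with
  | zero =>
    rw [pow_zero, Ideal.one_eq_top]
    have h1 : (1 : R) ∈ Ideal.span {x | ∃ f : Fin 0 → R, (∀ i, f i ∈ c) ∧ x = ∏ i, f i} :=
      Ideal.subset_span ⟨fun i => i.elim0, fun i => i.elim0, by simp⟩
    exact le_of_eq ((Ideal.eq_top_iff_one _).mpr h1).symm
  | succ k ih =>
    rw [pow_succ]
    apply Ideal.mul_le.mpr
    intro a ha b hb
    have ha' := ih ha
    set J : Ideal R :=
      Ideal.span {x | ∃ f : Fin (k+1) → R, (∀ i, f i ∈ c) ∧ x = ∏ i, f i} with hJ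
    refine Submodule.span_induction (p := fun y _ => y * b ∈ J) ?_ ?_ ?_ ?_ ha'
    · rintro y ⟨f, hf, rfl⟩
      show (∏ i, f i) * b ∈ J
      apply Ideal.subset_span
      refine ⟨Fin.snoc f b, ?_, ?_⟩
      · intro i
        refine Fin.lastCases ?_ ?_ i
        · rw [Fin.snoc_last]; exact hb
        · intro j; rw [Fin.snoc_castSucc]; exact hf j
      · rw [Fin.prod_univ_castSucc]
        simp [Fin.snoc_last, Fin.snoc_castSucc]
    · show (0 : R) * b ∈ J
      rw [zero_mul]; exact Ideal.zero_mem _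
    · intro x y _ _ hx hy
      show (x + y) * b ∈ J
      rw [add_mul]; exact Ideal.add_mem _ hx hy
    · intro r x _ hx
      show (r • x) * b ∈ J
      rw [smul_eq_mul, mul_assoc]
      exact Ideal.mul_mem_left _ _ hx
  
lemma support_prod_mem : ∀ {k : ℕ} (p : Fin k → MvPolynomial I A) {ρ : I →₀ ℕ},
    ρ ∈ (∏ i, p i).support →
    ∃ ρs : Fin k → (I →₀ ℕ), (∀ i, ρs i ∈ (p i).support) ∧ ρ = ∑ i, ρs i := by
  intro k
  induction k with
  | zero =>
    intro p ρ h
    classical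
    refine ⟨fun i => i.elim0, fun i => i.elim0, ?_⟩
    rw [Fin.prod_univ_zero] at h
    have hc := MvPolynomial.mem_support_iff.mp h
    have : ρ = 0 := by
      by_contra hρ
      exact hc (by rw [MvPolynomial.coeff_one, if_neg (fun hh => hρ hh.symm)])
    rw [this]
    simp
  | succ k ih =>
    intro p ρ h
    classical
    rw [Fin.prod_univ_succ] at h
    obtain ⟨u, hu, v, hv, huv⟩ := Finset.mem_add.mp (MvPolynomial.support_mul _ _ h)
    obtain ⟨ρs, hρs, hsum⟩ := ih (fun i => p i.succ) hv
    refine ⟨Fin.cons u ρs, ?_, ?_⟩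
    · intro i
      refine Fin.cases ?_ ?_ i
      · rw [Fin.cons_zero]; exact hu
      · intro j; rw [Fin.cons_succ]; exact hρs j
    · have hc : ∑ i, Fin.cons u ρs i = u + ∑ j, ρs j := Fin.sum_cons u ρs
      rw [hc, ← huv, hsum]

lemma pow_restrict_le_floorH [Nontrivial A] (hH : H.FiniteIndex)
    {𝔞 : Ideal (MvPolynomial I A)} (hmon : IsMonomialIdeal 𝔞) (hfg : 𝔞.FG) :
    ∃ k : ℕ, idealRestrict ψ H 𝔞 ^ k ≤ floorH ψ H 𝔞 := by
  classical
  by_cases h1 : (1 : MvPolynomial I A) ∈ 𝔞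
  · refine ⟨0, ?_⟩
    rw [pow_zero, Ideal.one_eq_top]
    have h0 : (0 : I →₀ ℕ) ∈ Emin (A := A) 𝔞 := by
      constructor
      · rw [MvPolynomial.monomial_zero', map_one]; exact h1
      · intro ν _ hν
        exact le_antisymm hν zero_le
    have hone : (1 : degRestrict A ψ H) ∈ floorH ψ H 𝔞 := by
      apply Ideal.subset_span
      refine ⟨0, h0, ?_⟩
      rw [suppInd_zero, smul_zero, MvPolynomial.monomial_zero', map_one]
      rfl
    exact le_of_eq ((Ideal.eq_top_iff_one _).mpr hone).symm
  · have hfin := emin_finite (A := A) hmon hfg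
    set T : Finset (I →₀ ℕ) := hfin.toFinset with hT
    set m : (I →₀ ℕ) → ℕ := mdeg ψ H 𝔞 with hm
    set k : ℕ := 1 + ∑ μ ∈ T, (m μ - 1) with hk
    refine ⟨k, le_trans (pow_le_span_prods _ _) (Ideal.span_le.mpr ?_)⟩
    rintro s ⟨f, hf, rfl⟩
    apply mem_of_support
    intro ρ hρ hρH
    have hcoe : ((∏ i, f i : degRestrict A ψ H) : MvPolynomial I A)
        = ∏ i, ((f i : degRestrict A ψ H) : MvPolynomial I A) :=
      SubmonoidClass.coe_finset_prod f Finset.univ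
    rw [hcoe] at hρ
    obtain ⟨ρs, hρs, hρeq⟩ := support_prod_mem _ hρ
    obtain ⟨E, hE⟩ := hmon
    have h𝔞i : ∀ i, monomial (ρs i) (1 : A) ∈ 𝔞 := by
      intro i
      have hfi : ((f i : degRestrict A ψ H) : MvPolynomial I A) ∈ 𝔞 := hf i
      rw [hE, MvPolynomial.mem_ideal_span_monomial_image] at hfi ⊢
      intro xi hxi
      rw [MvPolynomial.support_monomial, if_neg (one_ne_zero), Finset.mem_singleton] at hxi
      subst hxi
      exact hfi (ρs i) (hρs i)
    have hemin : ∀ i, ∃ μ ∈ Emin (A := A) 𝔞, μ ≤ ρs i := fun i => exists_emin_le (h𝔞i i)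
    choose g hg1 hg2 using hemin
    have hgT : ∀ i, g i ∈ T := fun i => hfin.mem_toFinset.mpr (hg1 i)
    have hcount : ∑ μ ∈ T, (Finset.univ.filter (fun i => g i = μ)).card = k := by
      rw [← Finset.card_eq_sum_card_fiberwise (fun i _ => hgT i)]
      simp
    have hlt : ∑ μ ∈ T, (m μ - 1)
        < ∑ μ ∈ T, (Finset.univ.filter (fun i => g i = μ)).card := by
      rw [hcount, hk]; omega
    obtain ⟨μ0, hμ0T, hfib⟩ := Finset.exists_lt_of_sum_lt hlt
    have hμ0 : μ0 ∈ Emin (A := A) 𝔞 := hfin.mem_toFinset.mp hμ0T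
    have hspec := mdeg_spec ψ H hH hμ0.1
    have hm1 : 1 ≤ m μ0 := by
      by_contra hc
      have hz : m μ0 = 0 := by omega
      have h𝔞0 := hspec.1
      rw [hm] at hz
      rw [hz, zero_smul, MvPolynomial.monomial_zero', map_one] at h𝔞0
      exact h1 h𝔞0
    have hfc : m μ0 ≤ (Finset.univ.filter (fun i => g i = μ0)).card := by omega
    set τ : I →₀ ℕ := m μ0 • suppInd μ0 with hτdef
    have hτρ : τ ≤ ρ := by
      rw [hρeq]
      calc τ ≤ (Finset.univ.filter (fun i => g i = μ0)).card • μ0 := by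
            rw [Finsupp.le_def]
            intro i
            rw [hτdef, Finsupp.smul_apply, Finsupp.smul_apply, suppInd_apply,
              smul_eq_mul, smul_eq_mul]
            have h3 : μ0 i ≤ μ0 i := le_rfl
            split
            · omega
            · rename_i hne
              have : 1 ≤ μ0 i := by omega
              calc m μ0 * 1 ≤ (Finset.univ.filter (fun i => g i = μ0)).card * μ0 i :=
                Nat.mul_le_mul hfc this
                _ = _ := rfl
        _ = ∑ _i ∈ Finset.univ.filter (fun i => g i = μ0), μ0 := (Finset.sum_const _).symm
        _ ≤ ∑ i ∈ Finset.univ.filter (fun i => g i = μ0), ρs i := by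
            apply Finset.sum_le_sum
            intro i hi
            have hgi : g i = μ0 := (Finset.mem_filter.mp hi).2
            rw [← hgi]
            exact hg2 i
        _ ≤ ∑ i, ρs i := Finset.sum_le_sum_of_subset (Finset.filter_subset _ _)
    have hτH : ψ (natToInt τ) ∈ H := by
      have hmem := (mem_degRestrict_iff ψ H).mp hspec.2
      apply hmem τ
      rw [MvPolynomial.support_monomial, if_neg (one_ne_zero)]
      exact Finset.mem_singleton_self τ
    have hσH : ψ (natToInt (ρ - τ)) ∈ H := by
      rw [natToInt_sub hτρ, map_sub]
      exact H.sub_mem hρH hτH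
    have key : monS (A := A) ψ H ρ hρH
        = monS (A := A) ψ H (ρ - τ) hσH * monS (A := A) ψ H τ hτH := by
      apply Subtype.ext
      show monomial ρ (1 : A) = monomial (ρ - τ) (1 : A) * monomial τ (1 : A)
      rw [MvPolynomial.monomial_mul, one_mul, tsub_add_cancel_of_le hτρ]
    rw [key]
    apply Ideal.mul_mem_left
    apply Ideal.subset_span
    exact ⟨μ0, hμ0, rfl⟩

end Aux

/-- (Proposition 2.40 b)): for finitely generated monomial ideals
`𝔞, 𝔟` of `R = A[(X_i)_{i ∈ I}]` and `H ≤ G` of finite index, if `⌊𝔞⌋_H = ⌊𝔟⌋_H`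
then the torsion functors `Γ_{𝔞_(H)}` and `Γ_{𝔟_(H)}` over `S = R_(H)` coincide. -/
theorem torsion_restrict_eq_of_floorH_eq
    {A : Type u} [CommRing A] {I : Type v}
    {G : Type w} [AddCommGroup G] (ψ : (I →₀ ℤ) →+ G) (hψ : Function.Surjective ψ)
    (H : AddSubgroup G) (hH : H.FiniteIndex)
    (𝔞 𝔟 : Ideal (MvPolynomial I A)) (h𝔞 : IsMonomialIdeal 𝔞) (h𝔟 : IsMonomialIdeal 𝔟)
    (hfg𝔞 : 𝔞.FG) (hfg𝔟 : 𝔟.FG)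
    (hfl : floorH ψ H 𝔞 = floorH ψ H 𝔟) :
    ∀ (M : Type (max u v)) [AddCommGroup M] [Module (degRestrict A ψ H) M] (x : M),
      (∃ n : ℕ, (idealRestrict ψ H 𝔞) ^ n ≤ Ideal.torsionOf (degRestrict A ψ H) M x) ↔
        (∃ n : ℕ, (idealRestrict ψ H 𝔟) ^ n ≤ Ideal.torsionOf (degRestrict A ψ H) M x)  := by
  intro M _ _ x
  rcases subsingleton_or_nontrivial A with hA | hA
  · have hS : Subsingleton (degRestrict A ψ H) := by
      constructor
      intro a b
      apply Subtype.ext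
      apply MvPolynomial.ext
      intro mo
      exact Subsingleton.elim _ _
    constructor <;> intro _ <;> refine ⟨0, ?_⟩ <;>
    · rw [pow_zero, Ideal.one_eq_top]
      intro s _
      rw [Ideal.mem_torsionOf_iff]
      rw [Subsingleton.elim s 0, zero_smul]
  · have h1 : ∃ k : ℕ, idealRestrict ψ H 𝔞 ^ k ≤ idealRestrict ψ H 𝔟 := by
      obtain ⟨k, hk⟩ := pow_restrict_le_floorH ψ H hH h𝔞 hfg𝔞
      refine ⟨k, hk.trans ?_⟩
      rw [hfl]
      exact floorH_le_idealRestrict ψ H hH 𝔟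
    have h2 : ∃ k : ℕ, idealRestrict ψ H 𝔟 ^ k ≤ idealRestrict ψ H 𝔞 := by
      obtain ⟨k, hk⟩ := pow_restrict_le_floorH ψ H hH h𝔟 hfg𝔟
      refine ⟨k, hk.trans ?_⟩
      rw [← hfl]
      exact floorH_le_idealRestrict ψ H hH 𝔞
    constructor
    · rintro ⟨n, hn⟩
      obtain ⟨k, hk⟩ := h2
      refine ⟨k * n, ?_⟩
      rw [pow_mul]
      exact le_trans (Ideal.pow_right_mono hk n) hn
    · rintro ⟨n, hn⟩
      obtain ⟨k, hk⟩ := h1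
      refine ⟨k * n, ?_⟩
      rw [pow_mul]
      exact le_trans (Ideal.pow_right_mono hk n) hn
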